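/- Let X be a finitely generated free abelian group and θ : X → X an involutive group homomorphism. Let X̆ = { λ − θ(λ) : λ ∈ X } and X_ι = X / X̆. Then X_ι has no odd torsion: for any x ∈ X_ι and any odd natural number n with n·x = 0, we have x = 0. -/
import Mathlib


/-- The ι-weight lattice `X_ι = X / {λ - θλ}` of a finitely generated free abelian group `X`
with involution `θ` has no odd torsion. -/
theorem stmt0 (X : Type*) [AddCommGroup X] [Module.Free ℤ X] [Module.Finite ℤ X]
    (θ : X →+ X) (hθ : ∀ x, θ (θ x) = x) :
    ∀ (x : X ⧸ (AddMonoidHom.id X - θ).range) (n : ℕ),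
      Odd n → n • x = 0 → x = 0 := by
  intro x n hn hnx
  obtain ⟨l, rfl⟩ := QuotientAddGroup.mk'_surjective _ x
  obtain ⟨k, hk⟩ := hn
  have hnx' : ((QuotientAddGroup.mk' (AddMonoidHom.id X - θ).range) (n • l)) = 0 := by
    rw [map_nsmul]; exact hnx
  rw [QuotientAddGroup.mk'_apply, QuotientAddGroup.eq_zero_iff] at hnx' ⊢
  obtain ⟨μ, hμ⟩ := hnx'
  simp only [AddMonoidHom.sub_apply, AddMonoidHom.id_apply] at hμ
  have h2 : θ μ - μ = n • θ l := by
    have h := congrArg θ hμ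
    rwa [map_sub, hθ, map_nsmul] at h
  have h3 : l + θ l = 0 := by
    have h4 : (n : ℤ) • (l + θ l) = 0 := by
      rw [natCast_zsmul, smul_add, ← hμ, ← h2]; abel
    have hn0 : (n : ℤ) ≠ 0 := by omega
    exact (smul_eq_zero.mp h4).resolve_left hn0
  have hθl : θ l = -l := (neg_eq_of_add_eq_zero_right h3).symm
  refine ⟨μ - k • l, ?_⟩
  simp only [AddMonoidHom.sub_apply, AddMonoidHom.id_apply, map_sub, map_nsmul, hθl, smul_neg]
  have : μ - θ μ = (2 * k + 1) • l := hk ▸ hμ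
  rw [this, sub_neg_eq_add, ← two_nsmul, smul_smul, mul_comm k 2, add_smul, one_smul,
    add_sub_cancel_left]
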